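/- arXiv:2312.11661 — 9 statements merged into one kernel-verified Lean document; each statement's English description precedes it below -/
import Mathlib

section
/- If n is a perfect number (σ(n) = 2n), then z(n) < log(τ(n) − 1), where z(n) = ∑_{d|n} (log d)/d. -/
open Finset Real

lemma sum_inv_divisors_eq_two (n : ℕ) (hn : 0 < n)
    (hperf : (∑ d ∈ n.divisors, d) = 2 * n) :
    ∑ d ∈ n.divisors, ((d : ℝ))⁻¹ = 2 := by
  have key : ∑ d ∈ n.divisors, ((d : ℝ))⁻¹
      = ∑ d ∈ n.divisors, ((n / d : ℕ) : ℝ) / n := by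
    refine Finset.sum_congr rfl fun d hd => ?_
    rw [Nat.mem_divisors] at hd
    obtain ⟨hdvd, -⟩ := hd
    have hd0 : (0:ℝ) < d := by
      have : 0 < d := Nat.pos_of_dvd_of_pos hdvd hn
      exact_mod_cast this
    rw [Nat.cast_div hdvd (by positivity)]
    field_simp
  rw [key, ← Finset.sum_div]
  rw [Nat.sum_div_divisors n (fun d => (d : ℝ))]
  have : (∑ d ∈ n.divisors, (d:ℝ)) = 2 * n := by rw [← Nat.cast_sum, hperf]; push_cast; ring
  rw [this]
  field_simp

theorem zaremba_perfect_upper (n : ℕ) (hn : 0 < n) (hperf : (∑ d ∈ n.divisors, d) = 2 * n) :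
    ∑ d ∈ n.divisors, Real.log d / d < Real.log (n.divisors.card - 1) := by
  set t := n.divisors.erase 1 with ht
  have h1mem : 1 ∈ n.divisors := Nat.one_mem_divisors.mpr hn.ne'
  have hge2 : ∀ d ∈ t, 2 ≤ d := by
    intro d hd
    rw [ht, Finset.mem_erase, Nat.mem_divisors] at hd
    have := Nat.pos_of_dvd_of_pos hd.2.1 hn
    omega
  have hw1 : ∑ d ∈ t, ((d:ℝ))⁻¹ = 1 := by
    have := sum_inv_divisors_eq_two n hn hperf
    rw [← Finset.add_sum_erase _ _ h1mem] at this
    simp only [Nat.cast_one, inv_one] at this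
    rw [ht]; linarith
  -- t has at least 2 elements
  have hcard2 : 2 ≤ t.card := by
    by_contra h
    push_neg at h
    interval_cases ht' : t.card
    · rw [Finset.card_eq_zero] at ht'
      rw [ht', Finset.sum_empty] at hw1; norm_num at hw1
    · rw [Finset.card_eq_one] at ht'
      obtain ⟨a, ha⟩ := ht'
      have ha2 : 2 ≤ a := hge2 a (by simp [ha])
      rw [ha, Finset.sum_singleton] at hw1
      have : (a:ℝ)⁻¹ ≤ 2⁻¹ := by
        apply inv_anti₀ (by norm_num)
        exact_mod_cast ha2
      rw [hw1] at this; norm_num at this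
  obtain ⟨j, hj, k, hk, hjk⟩ := Finset.one_lt_card.mp hcard2
  have hjensen := strictConcaveOn_log_Ioi.lt_map_sum (t := t)
    (w := fun d => ((d:ℝ))⁻¹) (p := fun d => (d:ℝ))
    (fun d hd => by
      have := hge2 d hd
      positivity)
    hw1
    (fun d hd => by
      have := hge2 d hd
      simp only [Set.mem_Ioi]; positivity)
    ⟨j, hj, k, hk, by simpa using hjk⟩
  have hsum_pts : ∑ d ∈ t, ((d:ℝ))⁻¹ • (d:ℝ) = t.card := by
    rw [Finset.sum_congr rfl (fun d hd => ?_)]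
    · rw [Finset.sum_const, nsmul_eq_mul, mul_one]
    · have h2 := hge2 d hd
      have : (d:ℝ) ≠ 0 := by positivity
      simp [smul_eq_mul, inv_mul_cancel₀ this]
  have hlhs : ∑ d ∈ n.divisors, Real.log d / d = ∑ d ∈ t, ((d:ℝ))⁻¹ • Real.log d := by
    rw [← Finset.add_sum_erase _ _ h1mem]
    simp [smul_eq_mul, div_eq_inv_mul, ht]
  have hcard : (t.card : ℝ) = (n.divisors.card : ℝ) - 1 := by
    rw [ht, Finset.card_erase_of_mem h1mem]
    have : 1 ≤ n.divisors.card := Finset.card_pos.mpr ⟨1, h1mem⟩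
    push_cast [Nat.cast_sub this]
    ring
  rw [hlhs]
  calc ∑ d ∈ t, ((d:ℝ))⁻¹ • Real.log d
      < Real.log (∑ d ∈ t, ((d:ℝ))⁻¹ • (d:ℝ)) := hjensen
    _ = Real.log ((n.divisors.card : ℝ) - 1) := by rw [hsum_pts, hcard]
end

section
/- If n is a deficient number (σ(n) < 2n), then z(n) ≤ log(τ(n) + 2 − h(n)), where z(n) = ∑_{d|n} (log d)/d and h(n) = σ(n)/n. -/
open Finset Real

theorem zaremba_deficient_upper (n : ℕ) (hn : 0 < n) (hdef : (∑ d ∈ n.divisors, d) < 2 * n) :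
    ∑ d ∈ n.divisors, Real.log d / d ≤
      Real.log ((n.divisors.card : ℝ) + 2 - ((∑ d ∈ n.divisors, d : ℕ) : ℝ) / n) := by
  have hn' : (0:ℝ) < n := by exact_mod_cast hn
  set σ : ℝ := ((∑ d ∈ n.divisors, d : ℕ) : ℝ) with hσ
  set h : ℝ := σ / n with hh
  have hpos : ∀ d ∈ n.divisors, 0 < (d:ℝ) := by
    intro d hd
    exact_mod_cast Nat.pos_of_mem_divisors hd
  -- ∑ 1/d = h
  have hkey : ∑ d ∈ n.divisors, (n:ℝ)/d = σ := by
    have h1 : σ = ∑ d ∈ n.divisors, ((n/d : ℕ) : ℝ) := by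
      rw [hσ, Nat.cast_sum, ← Nat.sum_div_divisors n (fun d => (d:ℝ))]
    rw [h1]
    refine Finset.sum_congr rfl fun d hd => ?_
    rw [Nat.cast_div (Nat.mem_divisors.mp hd).1 (hpos d hd).ne']
  have hsum : ∑ d ∈ n.divisors, (1:ℝ)/d = h := by
    rw [hh, ← hkey, Finset.sum_div]
    refine Finset.sum_congr rfl fun d hd => ?_
    rw [div_right_comm, div_self hn'.ne']
  have hh2 : h < 2 := by
    rw [hh, div_lt_iff₀ hn', hσ]
    have : ((∑ d ∈ n.divisors, d : ℕ) : ℝ) < ((2*n : ℕ) : ℝ) := by exact_mod_cast hdef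
    push_cast at this ⊢
    linarith
  have h1mem : (1:ℕ) ∈ n.divisors := Nat.one_mem_divisors.mpr hn.ne'
  set w : ℕ → ℝ := fun d => if d = 1 then 2 - h else 1/d with hw
  set p : ℕ → ℝ := fun d => (d:ℝ) with hp
  have hw_sum : ∑ d ∈ n.divisors, w d = 1 := by
    rw [← Finset.add_sum_erase _ w h1mem]
    have h1 : ∑ d ∈ n.divisors.erase 1, w d = h - 1 := by
      have : ∑ d ∈ n.divisors.erase 1, w d = ∑ d ∈ n.divisors.erase 1, (1:ℝ)/d := by
        refine Finset.sum_congr rfl fun d hd => ?_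
        simp [hw, Finset.ne_of_mem_erase hd]
      rw [this]
      have := Finset.add_sum_erase _ (fun d : ℕ => (1:ℝ)/d) h1mem
      rw [hsum] at this
      simp only [Nat.cast_one, div_one] at this
      linarith
    simp only [hw, if_pos rfl] at *
    rw [h1]; ring
  have jensen := strictConcaveOn_log_Ioi.concaveOn.le_map_sum (t := n.divisors) (w := w) (p := p)
    (fun d hd => ?_) hw_sum (fun d hd => hpos d hd)
  · -- identify both sides
    have hL : ∑ d ∈ n.divisors, w d • Real.log (p d) = ∑ d ∈ n.divisors, Real.log d / d := by
      refine Finset.sum_congr rfl fun d hd => ?_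
      by_cases hd1 : d = 1
      · simp [hd1, hw, hp]
      · simp [hw, hp, hd1, smul_eq_mul, inv_mul_eq_div]
    have hR : ∑ d ∈ n.divisors, w d • p d = (n.divisors.card : ℝ) + 1 - h := by
      rw [← Finset.add_sum_erase _ (fun d => w d • p d) h1mem]
      have h2 : ∑ d ∈ n.divisors.erase 1, w d • p d
          = ((n.divisors.erase 1).card : ℝ) := by
        rw [Finset.card_eq_sum_ones, Nat.cast_sum]
        refine Finset.sum_congr rfl fun d hd => ?_
        have hd0 : (d:ℝ) ≠ 0 := (hpos d (Finset.mem_of_mem_erase hd)).ne'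
        simp [hw, hp, Finset.ne_of_mem_erase hd, smul_eq_mul, div_mul_cancel₀, hd0]
      rw [h2, Finset.card_erase_of_mem h1mem]
      have hcard : 1 ≤ n.divisors.card := Finset.card_pos.mpr ⟨1, h1mem⟩
      simp only [hw, hp, if_pos rfl, Nat.cast_one, smul_eq_mul, mul_one]
      rw [Nat.cast_sub hcard]
      push_cast; ring
    rw [hL, hR] at jensen
    refine jensen.trans (Real.log_le_log ?_ ?_)
    · have hcard : 1 ≤ n.divisors.card := Finset.card_pos.mpr ⟨1, h1mem⟩
      have : (1:ℝ) ≤ (n.divisors.card : ℝ) := by exact_mod_cast hcard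
      linarith
    · linarith
  · -- weights nonneg
    by_cases hd1 : d = 1
    · simp only [hw, hd1, if_true]
      linarith
    · simp only [hw, hd1, if_false]
      positivity
end

section
/- z(n) = O((log τ(n))²); more precisely, there is an absolute constant C such that for all n ≥ 2, z(n) ≤ C·(log τ(n) + 1)². -/
open Finset Real

lemma log_div_le_two_div_sqrt {d : ℕ} (hd : 1 ≤ d) :
    Real.log d / d ≤ 2 / Real.sqrt d := by
  have hd0 : (0:ℝ) < d := by exact_mod_cast hd
  have hs : (0:ℝ) < Real.sqrt d := Real.sqrt_pos.mpr hd0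
  have hlog : Real.log d ≤ 2 * Real.sqrt d := by
    have := Real.log_le_sub_one_of_pos hs
    have h2 : Real.log d = 2 * Real.log (Real.sqrt d) := by
      rw [show (2:ℝ) * Real.log (Real.sqrt d) = Real.log (Real.sqrt d ^ 2) by
        rw [Real.log_pow]; push_cast; ring, Real.sq_sqrt hd0.le]
    nlinarith
  rw [div_le_div_iff₀ hd0 hs]
  calc Real.log d * Real.sqrt d ≤ 2 * Real.sqrt d * Real.sqrt d := by nlinarith
    _ = 2 * d := by rw [mul_assoc, Real.mul_self_sqrt hd0.le]
    _ = 2 * d := rfl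

theorem zaremba_big_O_log_tau_sq :
    ∃ C : ℝ, ∀ n : ℕ, 2 ≤ n →
      ∑ d ∈ n.divisors, Real.log d / d ≤
        C * (Real.log (n.divisors.card) + 1) ^ 2 := by
  use 4
  intro n hn
  set k := n.divisors.card with hk
  have hn0 : n ≠ 0 := by omega
  have hk2 : 2 ≤ k := by
    have h1 : 1 ∈ n.divisors := Nat.one_mem_divisors.mpr hn0
    have h2 : n ∈ n.divisors := Nat.mem_divisors_self n hn0
    have : ({1, n} : Finset ℕ) ⊆ n.divisors := by
      intro x hx; simp at hx; rcases hx with h | h <;> simp [h, h1, h2]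
    calc 2 = ({1, n} : Finset ℕ).card := by rw [Finset.card_insert_of_notMem (by simp; omega), Finset.card_singleton]
      _ ≤ k := Finset.card_le_card this
  have hK : (2:ℝ) ≤ (k:ℝ) := by exact_mod_cast hk2
  have hlogk : 0 < Real.log k := Real.log_pos (by linarith)
  -- split
  rw [← Finset.sum_filter_add_sum_filter_not n.divisors (fun d => d ≤ k^2)]
  have part1 : ∑ d ∈ n.divisors.filter (fun d => d ≤ k^2), Real.log d / d
      ≤ 2 * Real.log k * (1 + 2 * Real.log k) := by
    calc ∑ d ∈ n.divisors.filter (fun d => d ≤ k^2), Real.log d / d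
        ≤ ∑ d ∈ n.divisors.filter (fun d => d ≤ k^2), 2 * Real.log k * (d:ℝ)⁻¹ := by
          apply Finset.sum_le_sum
          intro d hd
          simp only [Finset.mem_filter, Nat.mem_divisors] at hd
          have hd1 : 1 ≤ d := Nat.pos_of_mem_divisors (Nat.mem_divisors.mpr hd.1)
          have hd0 : (0:ℝ) < d := by exact_mod_cast hd1
          rw [div_eq_mul_inv]
          apply mul_le_mul_of_nonneg_right _ (by positivity)
          calc Real.log d ≤ Real.log (k^2 : ℕ) := by
                apply Real.log_le_log hd0; exact_mod_cast hd.2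
            _ = 2 * Real.log k := by push_cast; rw [Real.log_pow]; ring
      _ = 2 * Real.log k * ∑ d ∈ n.divisors.filter (fun d => d ≤ k^2), (d:ℝ)⁻¹ := by
          rw [Finset.mul_sum]
      _ ≤ 2 * Real.log k * (1 + 2 * Real.log k) := by
          apply mul_le_mul_of_nonneg_left _ (by positivity)
          have hsub : n.divisors.filter (fun d => d ≤ k^2) ⊆ Finset.Icc 1 (k^2) := by
            intro d hd
            simp only [Finset.mem_filter] at hd
            exact Finset.mem_Icc.mpr ⟨Nat.pos_of_mem_divisors hd.1, hd.2⟩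
          calc ∑ d ∈ n.divisors.filter (fun d => d ≤ k^2), (d:ℝ)⁻¹
              ≤ ∑ d ∈ Finset.Icc 1 (k^2), (d:ℝ)⁻¹ :=
                Finset.sum_le_sum_of_subset_of_nonneg hsub (by intros; positivity)
            _ = (harmonic (k^2) : ℝ) := by
                rw [harmonic_eq_sum_Icc]; push_cast; ring
            _ ≤ 1 + Real.log ((k^2 : ℕ) : ℝ) := harmonic_le_one_add_log _
            _ = 1 + 2 * Real.log k := by push_cast; rw [Real.log_pow]; ring
  have part2 : ∑ d ∈ n.divisors.filter (fun d => ¬ d ≤ k^2), Real.log d / d ≤ 2 := by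
    calc ∑ d ∈ n.divisors.filter (fun d => ¬ d ≤ k^2), Real.log d / d
        ≤ ∑ d ∈ n.divisors.filter (fun d => ¬ d ≤ k^2), 2 / (k:ℝ) := by
          apply Finset.sum_le_sum
          intro d hd
          simp only [Finset.mem_filter, not_le] at hd
          have hd1 : 1 ≤ d := Nat.pos_of_mem_divisors hd.1
          refine (log_div_le_two_div_sqrt hd1).trans ?_
          apply div_le_div_of_nonneg_left (by norm_num) (by linarith) ?_
          calc (k:ℝ) = Real.sqrt ((k:ℝ)^2) := by
                rw [Real.sqrt_sq (by linarith)]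
            _ ≤ Real.sqrt d := by
                apply Real.sqrt_le_sqrt
                have := hd.2
                push_cast
                exact_mod_cast Nat.le_of_lt this
      _ = (n.divisors.filter (fun d => ¬ d ≤ k^2)).card * (2 / (k:ℝ)) := by
          rw [Finset.sum_const, nsmul_eq_mul]
      _ ≤ (k:ℝ) * (2 / (k:ℝ)) := by
          apply mul_le_mul_of_nonneg_right _ (by positivity)
          exact_mod_cast Finset.card_le_card (Finset.filter_subset _ _)
      _ = 2 := by field_simp
  nlinarith [sq_nonneg (Real.log k - 1), sq_nonneg (Real.log k)]
end

section
/- For every positive integer n, z(n) ≤ (∏_{p|n} p/(p−1)) · (∑_{p|n} (log p)/(p−1)), where the product and sum range over the distinct prime divisors of n. -/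
open Finset

/-- Splitting a sum over divisors of a product of coprime numbers. -/
lemma weber_sum_divisors_coprime_mul {M : Type*} [AddCommMonoid M] (f : ℕ → M) {a b : ℕ}
    (hab : a.Coprime b) :
    ∑ d ∈ (a * b).divisors, f d = ∑ x ∈ a.divisors, ∑ y ∈ b.divisors, f (x * y) := by
  rcases eq_or_ne a 0 with rfl | ha
  · simp
  rcases eq_or_ne b 0 with rfl | hb
  · simp
  rw [← Finset.sum_product']
  refine Finset.sum_nbij' (i := fun d : ℕ => (d.gcd a, d.gcd b))
    (j := fun x : ℕ × ℕ => x.1 * x.2) ?_ ?_ ?_ ?_ ?_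
  · rintro d hd
    simp only [Finset.mem_product, Nat.mem_divisors]
    exact ⟨⟨Nat.gcd_dvd_right _ _, ha⟩, ⟨Nat.gcd_dvd_right _ _, hb⟩⟩
  · rintro ⟨x, y⟩ hxy
    simp only [Finset.mem_product, Nat.mem_divisors] at hxy
    exact Nat.mem_divisors.2 ⟨mul_dvd_mul hxy.1.1 hxy.2.1, mul_ne_zero ha hb⟩
  · intro d hd
    rw [Nat.mem_divisors] at hd
    exact (Nat.Coprime.gcd_mul d hab).symm.trans (Nat.gcd_eq_left hd.1)
  · rintro ⟨x, y⟩ hxy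
    simp only [Finset.mem_product, Nat.mem_divisors] at hxy
    obtain ⟨⟨hxa, -⟩, ⟨hyb, -⟩⟩ := hxy
    have hya : Nat.Coprime y a := (hab.coprime_dvd_right hyb).symm
    have hxb : Nat.Coprime x b := hab.coprime_dvd_left hxa
    have h1 : (x * y).gcd a = x := by
      apply Nat.dvd_antisymm
      · have hg : ((x * y).gcd a).Coprime y :=
          Nat.Coprime.coprime_dvd_left (Nat.gcd_dvd_right _ _) hya.symm
        exact hg.dvd_of_dvd_mul_right (Nat.gcd_dvd_left _ _)
      · exact Nat.dvd_gcd (dvd_mul_right _ _) hxa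
    have h2 : (x * y).gcd b = y := by
      apply Nat.dvd_antisymm
      · have hg : ((x * y).gcd b).Coprime x :=
          Nat.Coprime.coprime_dvd_left (Nat.gcd_dvd_right _ _) hxb.symm
        exact hg.dvd_of_dvd_mul_left (Nat.gcd_dvd_left _ _)
      · exact Nat.dvd_gcd (dvd_mul_left _ _) hyb
    simp [h1, h2]
  · intro d hd
    rw [Nat.mem_divisors] at hd
    congr 1
    exact ((Nat.Coprime.gcd_mul d hab).symm.trans (Nat.gcd_eq_left hd.1)).symm

/-- Key identity for the weighted geometric sum. -/
lemma weber_geom_identity {p : ℝ} (hp : p ≠ 0) (k : ℕ) :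
    (p - 1) * ∑ j ∈ range (k + 1), (j : ℝ) * p⁻¹ ^ j + (k + 1) * p⁻¹ ^ k =
      ∑ j ∈ range (k + 1), p⁻¹ ^ j := by
  have hx : p * p⁻¹ = 1 := mul_inv_cancel₀ hp
  induction k with
  | zero => simp
  | succ k ih =>
    rw [sum_range_succ, sum_range_succ (f := fun j => (p⁻¹ : ℝ) ^ j)]
    have hpx : p * p⁻¹ ^ (k + 1) = p⁻¹ ^ k := by
      rw [pow_succ, mul_comm (p⁻¹ ^ k), ← mul_assoc, hx, one_mul]
    push_cast
    nlinarith [ih, hpx]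

lemma weber_key (m : ℕ) :
    (∑ d ∈ m.divisors, (1 : ℝ) / d) ≤ (∏ p ∈ m.primeFactors, (p : ℝ) / (p - 1)) ∧
      (∑ d ∈ m.divisors, Real.log d / d) ≤
        (∑ d ∈ m.divisors, (1 : ℝ) / d) * ∑ p ∈ m.primeFactors, Real.log p / (p - 1) := by
  induction m using Nat.recOnPosPrimePosCoprime with
  | zero => simp
  | one => simp
  | prime_pow p k hp hk =>
    have hp2 : 2 ≤ p := hp.two_le
    have hp1 : (1 : ℝ) < p := by exact_mod_cast hp2
    have hp0 : (p : ℝ) ≠ 0 := by positivity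
    have hpf : (p ^ k).primeFactors = {p} := by
      rw [Nat.primeFactors_pow _ hk.ne', Nat.Prime.primeFactors hp]
    have hSval : ∑ d ∈ (p ^ k).divisors, (1 : ℝ) / d
        = ∑ j ∈ range (k + 1), ((p : ℝ)⁻¹) ^ j := by
      rw [Nat.sum_divisors_prime_pow hp]
      refine Finset.sum_congr rfl fun j hj => ?_
      rw [one_div, Nat.cast_pow, inv_pow]
    have hZval : ∑ d ∈ (p ^ k).divisors, Real.log d / d =
        Real.log p * ∑ j ∈ range (k + 1), (j : ℝ) * ((p : ℝ)⁻¹) ^ j := by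
      rw [Nat.sum_divisors_prime_pow hp, Finset.mul_sum]
      refine Finset.sum_congr rfl fun j hj => ?_
      rw [Nat.cast_pow, Real.log_pow, div_eq_mul_inv, ← inv_pow]
      ring
    have hgeo : ∑ j ∈ range (k + 1), ((p : ℝ)⁻¹) ^ j ≤ (p : ℝ) / (p - 1) := by
      have hne : (p : ℝ)⁻¹ ≠ 1 := by
        intro h; rw [inv_eq_one] at h; exact hp1.ne' h
      rw [geom_sum_eq hne]
      have hx1 : (p : ℝ)⁻¹ < 1 := inv_lt_one_of_one_lt₀ hp1
      have heq : ((p : ℝ)⁻¹ ^ (k + 1) - 1) / ((p : ℝ)⁻¹ - 1)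
          = (1 - (p : ℝ)⁻¹ ^ (k + 1)) / (1 - (p : ℝ)⁻¹) := by
        rw [← neg_div_neg_eq]; ring_nf
      rw [heq, div_le_div_iff₀ (by linarith) (by linarith)]
      have hpow : (0 : ℝ) ≤ ((p : ℝ)⁻¹) ^ (k + 1) := by positivity
      have hinv : (p : ℝ) * (p : ℝ)⁻¹ = 1 := mul_inv_cancel₀ hp0
      nlinarith [mul_nonneg hpow (by linarith : (0 : ℝ) ≤ (p : ℝ) - 1), hinv]
    constructor
    · rw [hpf, Finset.prod_singleton, hSval]
      exact hgeo
    · rw [hpf, Finset.sum_singleton, hZval, hSval]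
      have hid := weber_geom_identity hp0 k
      have hB : ((p : ℝ) - 1) * ∑ j ∈ range (k + 1), (j : ℝ) * ((p : ℝ)⁻¹) ^ j ≤
          ∑ j ∈ range (k + 1), ((p : ℝ)⁻¹) ^ j := by
        have : (0 : ℝ) ≤ ((k : ℝ) + 1) * ((p : ℝ)⁻¹) ^ k := by positivity
        linarith
      have hlog : 0 ≤ Real.log p := Real.log_nonneg hp1.le
      rw [mul_comm (∑ j ∈ range (k + 1), ((p : ℝ)⁻¹) ^ j)]
      have heq2 : Real.log p / ((p : ℝ) - 1) * ∑ j ∈ range (k + 1), ((p : ℝ)⁻¹) ^ j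
          = Real.log p * ((∑ j ∈ range (k + 1), ((p : ℝ)⁻¹) ^ j) / ((p : ℝ) - 1)) := by
        ring
      rw [heq2]
      apply mul_le_mul_of_nonneg_left _ hlog
      rw [le_div_iff₀ (by linarith)]
      nlinarith [hB]
  | coprime a b ha hb hab iha ihb =>
    have ha0 : a ≠ 0 := by omega
    have hb0 : b ≠ 0 := by omega
    have hSab : ∑ d ∈ (a * b).divisors, (1 : ℝ) / d
        = (∑ d ∈ a.divisors, (1 : ℝ) / d) * ∑ d ∈ b.divisors, (1 : ℝ) / d := by
      rw [weber_sum_divisors_coprime_mul _ hab, Finset.sum_mul_sum]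
      refine Finset.sum_congr rfl fun x hx => Finset.sum_congr rfl fun y hy => ?_
      rw [Nat.cast_mul, one_div, one_div, one_div, mul_inv]
    have hZab : ∑ d ∈ (a * b).divisors, Real.log d / d
        = (∑ d ∈ a.divisors, Real.log d / d) * (∑ d ∈ b.divisors, (1 : ℝ) / d)
          + (∑ d ∈ a.divisors, (1 : ℝ) / d) * ∑ d ∈ b.divisors, Real.log d / d := by
      rw [weber_sum_divisors_coprime_mul _ hab, Finset.sum_mul_sum, Finset.sum_mul_sum,
        ← Finset.sum_add_distrib]
      refine Finset.sum_congr rfl fun x hx => ?_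
      rw [← Finset.sum_add_distrib]
      refine Finset.sum_congr rfl fun y hy => ?_
      have hx0 : (x : ℝ) ≠ 0 := by
        have := Nat.pos_of_mem_divisors hx; positivity
      have hy0 : (y : ℝ) ≠ 0 := by
        have := Nat.pos_of_mem_divisors hy; positivity
      rw [Nat.cast_mul, Real.log_mul hx0 hy0]
      field_simp
      try ring
    have hpf : (a * b).primeFactors = a.primeFactors ∪ b.primeFactors :=
      Nat.primeFactors_mul ha0 hb0
    have hdisj : Disjoint a.primeFactors b.primeFactors := hab.disjoint_primeFactors
    have hSnn : ∀ c : ℕ, 0 ≤ ∑ d ∈ c.divisors, (1 : ℝ) / d := by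
      intro c; apply Finset.sum_nonneg; intro d hd; positivity
    have hPnn : ∀ c : ℕ, 0 ≤ ∏ p ∈ c.primeFactors, (p : ℝ) / (p - 1) := by
      intro c; apply Finset.prod_nonneg; intro q hq
      have hq2 : 2 ≤ q := (Nat.prime_of_mem_primeFactors hq).two_le
      have : (2 : ℝ) ≤ q := by exact_mod_cast hq2
      apply div_nonneg (by linarith); linarith
    constructor
    · rw [hSab, hpf, Finset.prod_union hdisj]
      exact mul_le_mul iha.1 ihb.1 (hSnn b) (hPnn a)
    · rw [hZab, hSab, hpf, Finset.sum_union hdisj]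
      have h1 : (∑ d ∈ a.divisors, Real.log d / d) * (∑ d ∈ b.divisors, (1 : ℝ) / d)
          ≤ (∑ d ∈ a.divisors, (1 : ℝ) / d) * (∑ p ∈ a.primeFactors, Real.log p / (p - 1))
            * ∑ d ∈ b.divisors, (1 : ℝ) / d :=
        mul_le_mul_of_nonneg_right iha.2 (hSnn b)
      have h2 : (∑ d ∈ a.divisors, (1 : ℝ) / d) * ∑ d ∈ b.divisors, Real.log d / d
          ≤ (∑ d ∈ a.divisors, (1 : ℝ) / d) *
            ((∑ d ∈ b.divisors, (1 : ℝ) / d) * ∑ p ∈ b.primeFactors, Real.log p / (p - 1)) :=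
        mul_le_mul_of_nonneg_left ihb.2 (hSnn a)
      nlinarith [h1, h2]

theorem weber_4_3 (n : ℕ) (hn : 0 < n) :
    ∑ d ∈ n.divisors, Real.log d / d ≤
      (∏ p ∈ n.primeFactors, (p : ℝ) / (p - 1)) *
        (∑ p ∈ n.primeFactors, Real.log p / (p - 1)) := by
  have key := weber_key n
  have hTnn : 0 ≤ ∑ p ∈ n.primeFactors, Real.log p / (p - 1) := by
    apply Finset.sum_nonneg; intro p hp
    have hp2 : 2 ≤ p := (Nat.prime_of_mem_primeFactors hp).two_le
    have h1 : (1 : ℝ) ≤ p := by exact_mod_cast Nat.one_le_of_lt hp2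
    apply div_nonneg (Real.log_nonneg h1); linarith
  calc ∑ d ∈ n.divisors, Real.log d / d
      ≤ (∑ d ∈ n.divisors, (1 : ℝ) / d) * ∑ p ∈ n.primeFactors, Real.log p / (p - 1) :=
        key.2
    _ ≤ (∏ p ∈ n.primeFactors, (p : ℝ) / (p - 1)) *
        ∑ p ∈ n.primeFactors, Real.log p / (p - 1) :=
        mul_le_mul_of_nonneg_right key.1 hTnn
end

section
/- If n = p₁^{a₁}···p_k^{a_k} with distinct primes p_i, then z(n) = ∑_{i=1}^k ∑_{j=1}^{a_i} (j·log p_i / p_i^j) · h(n / p_i^{a_i}), where h(m) = σ(m)/m. -/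
open Finset Nat

private lemma sum_divisors_coprime_mul {m n : ℕ} (h : Nat.Coprime m n) (f : ℕ → ℝ) :
    ∑ d ∈ (m * n).divisors, f d =
      ∑ d1 ∈ m.divisors, ∑ d2 ∈ n.divisors, f (d1 * d2) := by
  rw [Nat.divisors_mul, Finset.mul_def, Finset.sum_image, Finset.sum_product]
  rintro ⟨a, b⟩ hab ⟨c, d⟩ hcd (hx : a * b = c * d)
  simp only [Finset.coe_product, Set.mem_prod, Finset.mem_coe, Finset.mem_product, Nat.mem_divisors] at hab hcd
  have key : ∀ x y : ℕ, x ∣ m → y ∣ n → Nat.gcd (x * y) m = x := by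
    intro x y hx hy
    have hcop : Nat.Coprime y m := (h.symm.coprime_dvd_left hy)
    rw [Nat.Coprime.gcd_mul_right_cancel x hcop, Nat.gcd_eq_left hx]
  have hac : a = c := by
    rw [← key a b hab.1.1 hab.2.1, ← key c d hcd.1.1 hcd.2.1, hx]
  have ha0 : a ≠ 0 := by
    rintro rfl; exact hab.1.2 (Nat.eq_zero_of_zero_dvd hab.1.1)
  have hbd : b = d := by
    subst hac
    exact Nat.eq_of_mul_eq_mul_left (Nat.pos_of_ne_zero ha0) hx
  simp [hac, hbd]

theorem erdos_zaremba_rearrangement (n : ℕ) (hn : 0 < n) :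
    ∑ d ∈ n.divisors, Real.log d / d =
      ∑ p ∈ n.primeFactors, ∑ j ∈ Finset.Icc 1 (n.factorization p),
        (j * Real.log p / (p : ℝ) ^ j) *
          (((∑ e ∈ (n / p ^ n.factorization p).divisors, e : ℕ) : ℝ) / (n / p ^ n.factorization p)) := by
  have hn0 : n ≠ 0 := hn.ne'
  -- Step 1: expand log d as a sum over prime factors of n
  have h1 : ∀ d ∈ n.divisors, Real.log d / d =
      ∑ p ∈ n.primeFactors, (d.factorization p : ℝ) * Real.log p / d := by
    intro d hd
    rw [Nat.mem_divisors] at hd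
    have hlog : Real.log d = ∑ p ∈ n.primeFactors, (d.factorization p : ℝ) * Real.log p := by
      rw [Real.log_nat_eq_sum_factorization, Finsupp.sum, Nat.support_factorization]
      apply Finset.sum_subset (Nat.primeFactors_mono hd.1 hn0)
      intro p _ hp
      have h0 : d.factorization p = 0 := by
        rwa [← Nat.support_factorization, Finsupp.notMem_support_iff] at hp
      simp [h0]
    rw [hlog, Finset.sum_div]
  rw [Finset.sum_congr rfl h1, Finset.sum_comm]
  refine Finset.sum_congr rfl fun p hp => ?_
  have pp : p.Prime := Nat.prime_of_mem_primeFactors hp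
  set a := n.factorization p with ha
  set m := n / p ^ a with hm
  have hcop : Nat.Coprime (p ^ a) m := (Nat.coprime_ordCompl pp hn0).pow_left a
  have hpm : ¬ p ∣ m := (Nat.Prime.coprime_iff_not_dvd pp).mp (Nat.coprime_ordCompl pp hn0)
  have hnm : p ^ a * m = n := Nat.ordProj_mul_ordCompl_eq_self n p
  have hm0 : m ≠ 0 := by
    intro h0
    rw [h0, mul_zero] at hnm
    exact hn0 hnm.symm
  have hmR : (m : ℝ) ≠ 0 := Nat.cast_ne_zero.mpr hm0
  have hpR : (0:ℝ) < p := Nat.cast_pos.mpr pp.pos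
  have hdiv : (n : ℝ) / (p : ℝ) ^ a = (m : ℝ) := by
    rw [← hnm]
    push_cast
    rw [mul_div_cancel_left₀ _ (ne_of_gt (pow_pos hpR a))]
  -- σ(m)/m = ∑ 1/d
  have hsum : ((∑ e ∈ m.divisors, e : ℕ) : ℝ) / m = ∑ d ∈ m.divisors, (1 : ℝ) / d := by
    rw [← Nat.sum_div_divisors m (fun x : ℕ => (1 : ℝ) / x)]
    push_cast
    rw [Finset.sum_div]
    refine Finset.sum_congr rfl fun d hd => ?_
    obtain ⟨hdvd, -⟩ := Nat.mem_divisors.mp hd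
    have hd0 : (d : ℝ) ≠ 0 :=
      Nat.cast_ne_zero.mpr fun h0 => hm0 (Nat.eq_zero_of_zero_dvd (h0 ▸ hdvd))
    rw [Nat.cast_div hdvd hd0, one_div_div]
  rw [hdiv]
  -- rewrite LHS as double sum over divisors of p^a and of m
  have hL1 : ∑ d ∈ n.divisors, ((d.factorization p : ℝ) * Real.log p / d)
      = ∑ j ∈ Finset.range (a + 1), ∑ d2 ∈ m.divisors,
          (((p ^ j * d2).factorization p : ℝ) * Real.log p / (p ^ j * d2 : ℕ)) := by
    conv_lhs => rw [← hnm]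
    rw [sum_divisors_coprime_mul hcop, Nat.sum_divisors_prime_pow pp]
  rw [hL1]
  have hrange : Finset.range (a + 1) = Finset.Icc 0 a := by
    ext x; simp [Nat.lt_succ_iff]
  rw [hrange]
  rw [← Finset.sum_subset (Finset.Icc_subset_Icc_left (Nat.zero_le 1)) (fun x hx hx' => ?_)]
  · refine Finset.sum_congr rfl fun j hj => ?_
    have hsimp : ∀ d2 ∈ m.divisors,
        (((p ^ j * d2).factorization p : ℝ) * Real.log p / (p ^ j * d2 : ℕ))
          = (j * Real.log p / (p : ℝ) ^ j) * (1 / d2) := by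
      intro d2 hd2
      obtain ⟨hdvd, -⟩ := Nat.mem_divisors.mp hd2
      have hd20 : d2 ≠ 0 := fun h0 => hm0 (Nat.eq_zero_of_zero_dvd (h0 ▸ hdvd))
      have hpd2 : ¬ p ∣ d2 := fun hdd => hpm (hdd.trans hdvd)
      have hfact : (p ^ j * d2).factorization p = j := by
        rw [Nat.factorization_mul (pow_ne_zero j pp.pos.ne') hd20]
        simp [pp.factorization_pow, Nat.factorization_eq_zero_of_not_dvd hpd2]
      rw [hfact]
      push_cast
      rw [_root_.div_mul_div_comm, mul_one]
    rw [Finset.sum_congr rfl hsimp, ← Finset.mul_sum, ← hsum]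
  · -- the j = 0 term vanishes
    have hx0 : x = 0 := by
      simp only [Finset.mem_Icc] at hx hx'
      omega
    subst hx0
    refine Finset.sum_eq_zero fun d2 hd2 => ?_
    have hpd2 : ¬ p ∣ d2 := fun hdd => hpm (hdd.trans (Nat.mem_divisors.mp hd2).1)
    simp [Nat.factorization_eq_zero_of_not_dvd hpd2]
end

section
/- If n ≡ 2 (mod 3) or n ≡ 3 (mod 4), then n is not strongly pseudoperfect. -/
def StronglyPseudoperfect (n : ℕ) : Prop :=
  0 < n ∧ ∃ S₁ : Finset ℕ, S₁ ⊆ n.divisors ∧ ∑ d ∈ S₁, d = 2 * n ∧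
    ∀ d ∈ n.divisors, (d ∈ S₁ ↔ n / d ∈ S₁)

lemma sp_key {m : ℕ} [NeZero m] {n : ℕ} (hn : 0 < n) {S₁ : Finset ℕ}
    (hsub : S₁ ⊆ n.divisors) (hiff : ∀ d ∈ n.divisors, (d ∈ S₁ ↔ n / d ∈ S₁))
    (hmul : ∀ a b : ZMod m, a * b = (n : ZMod m) → a + b = 0)
    (hsq : ∀ a : ZMod m, a * a ≠ (n : ZMod m)) :
    ((∑ d ∈ S₁, d : ℕ) : ZMod m) = 0 := by
  push_cast
  refine Finset.sum_involution (fun d _ => n / d) ?_ ?_ ?_ ?_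
  · intro d hd
    have hdvd : d ∣ n := (Nat.mem_divisors.mp (hsub hd)).1
    have : ((d * (n / d) : ℕ) : ZMod m) = (n : ZMod m) := by
      rw [Nat.mul_div_cancel' hdvd]
    push_cast at this
    exact hmul _ _ this
  · intro d hd _ heq
    have hdvd : d ∣ n := (Nat.mem_divisors.mp (hsub hd)).1
    have : d * d = n := by
      conv_rhs => rw [← Nat.mul_div_cancel' hdvd, heq]
    apply hsq (d : ZMod m)
    rw [← this]; push_cast; ring
  · intro d hd
    exact ((hiff d (hsub hd)).mp hd)
  · intro d hd
    have hdvd : d ∣ n := (Nat.mem_divisors.mp (hsub hd)).1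
    exact Nat.div_div_self hdvd hn.ne'

theorem strongly_pseudoperfect_mod (n : ℕ) (h : n % 3 = 2 ∨ n % 4 = 3) :
    ¬ StronglyPseudoperfect n := by
  rintro ⟨hn, S₁, hsub, hsum, hiff⟩
  rcases h with h | h
  · have hcast : (n : ZMod 3) = 2 := by
      rw [← ZMod.natCast_mod n 3, h]; norm_num
    have key := sp_key (m := 3) hn hsub hiff
      (by rw [hcast]; decide) (by rw [hcast]; decide)
    rw [hsum] at key
    push_cast at key
    rw [hcast] at key
    revert key; decide
  · have hcast : (n : ZMod 4) = 3 := by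
      rw [← ZMod.natCast_mod n 4, h]; norm_num
    have key := sp_key (m := 4) hn hsub hiff
      (by rw [hcast]; decide) (by rw [hcast]; decide)
    rw [hsum] at key
    push_cast at key
    rw [hcast] at key
    revert key; decide
end

section
/- For every integer m ≥ 2, the number n = 2^{m−1}(2^m − 1) is strongly pseudoperfect: the set S₁ = {2^i : 0 ≤ i ≤ m−1} ∪ {2^i(2^m −1) : 0 ≤ i ≤ m−1} consists of divisors of n, sums to 2n, and is closed under d ↦ n/d. -/
lemma sum_range_two_pow (m : ℕ) : ∑ i ∈ Finset.range m, 2 ^ i = 2 ^ m - 1 := by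
  induction m with
  | zero => simp
  | succ n ih =>
    rw [Finset.sum_range_succ, ih]
    have : 1 ≤ 2 ^ n := Nat.one_le_two_pow
    have : 2 ^ (n + 1) = 2 * 2 ^ n := by ring
    omega

theorem euclid_strongly_pseudoperfect (m : ℕ) (hm : 2 ≤ m) :
    let n := 2 ^ (m - 1) * (2 ^ m - 1)
    let S₁ := (Finset.range m).image (fun i => 2 ^ i) ∪
      (Finset.range m).image (fun i => 2 ^ i * (2 ^ m - 1))
    S₁ ⊆ n.divisors ∧ ∑ d ∈ S₁, d = 2 * n ∧ (∀ d ∈ S₁, n / d ∈ S₁) ∧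
      StronglyPseudoperfect n := by
  intro n S₁
  set q := 2 ^ m - 1 with hq
  have h2m : 2 ^ m = 2 ^ (m - 1) * 2 := by
    rw [← pow_succ]
    congr 1
    omega
  have hpm : 4 ≤ 2 ^ m := by
    calc 4 = 2 ^ 2 := rfl
    _ ≤ 2 ^ m := Nat.pow_le_pow_right (by norm_num) hm
  have hq3 : 3 ≤ q := by omega
  have hqodd : q % 2 = 1 := by omega
  have hn : n = 2 ^ (m - 1) * q := rfl
  have hnpos : 0 < n := by
    rw [hn]
    exact Nat.mul_pos (Nat.pow_pos (by norm_num)) (by omega)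
  -- membership characterization
  have hmem : ∀ d, d ∈ S₁ ↔ (∃ i < m, d = 2 ^ i) ∨ (∃ i < m, d = 2 ^ i * q) := by
    intro d
    simp only [S₁, Finset.mem_union, Finset.mem_image, Finset.mem_range]
    constructor
    · rintro (⟨i, hi, rfl⟩ | ⟨i, hi, rfl⟩)
      · exact Or.inl ⟨i, hi, rfl⟩
      · exact Or.inr ⟨i, hi, rfl⟩
    · rintro (⟨i, hi, rfl⟩ | ⟨i, hi, rfl⟩)
      · exact Or.inl ⟨i, hi, rfl⟩
      · exact Or.inr ⟨i, hi, rfl⟩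
  have hsub : S₁ ⊆ n.divisors := by
    intro d hd
    rw [Nat.mem_divisors]
    refine ⟨?_, hnpos.ne'⟩
    rcases (hmem d).1 hd with ⟨i, hi, rfl⟩ | ⟨i, hi, rfl⟩
    · exact dvd_mul_of_dvd_left (pow_dvd_pow 2 (by omega)) q
    · exact mul_dvd_mul (pow_dvd_pow 2 (by omega)) dvd_rfl
  -- disjointness
  have hdisj : Disjoint ((Finset.range m).image (fun i => 2 ^ i))
      ((Finset.range m).image (fun i => 2 ^ i * q)) := by
    rw [Finset.disjoint_left]
    rintro d hd hd'
    simp only [Finset.mem_image, Finset.mem_range] at hd hd'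
    obtain ⟨i, hi, rfl⟩ := hd
    obtain ⟨j, hj, hj'⟩ := hd'
    have hdvd : q ∣ 2 ^ i := ⟨2 ^ j, by rw [← hj', mul_comm]⟩
    have hcop : Nat.Coprime q (2 ^ i) := by
      apply Nat.Coprime.pow_right
      rw [Nat.coprime_comm]
      exact Nat.coprime_two_left.mpr (Nat.odd_iff.mpr hqodd)
    have h1 : q ∣ 1 := hcop ▸ Nat.dvd_gcd dvd_rfl hdvd
    have := Nat.le_of_dvd one_pos h1
    omega
  -- the sum
  have hsum : ∑ d ∈ S₁, d = 2 * n := by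
    have hS : S₁ = (Finset.range m).image (fun i => 2 ^ i) ∪
        (Finset.range m).image (fun i => 2 ^ i * q) := rfl
    rw [hS, Finset.sum_union hdisj]
    have hinj1 : ∑ d ∈ (Finset.range m).image (fun i => 2 ^ i), d
        = ∑ i ∈ Finset.range m, 2 ^ i := by
      rw [Finset.sum_image]
      intro a _ b _ h
      exact Nat.pow_right_injective (le_refl 2) h
    have hinj2 : ∑ d ∈ (Finset.range m).image (fun i => 2 ^ i * q), d
        = ∑ i ∈ Finset.range m, 2 ^ i * q := by
      rw [Finset.sum_image]
      intro a _ b _ h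
      have := Nat.eq_of_mul_eq_mul_right (show 0 < q by omega) h
      exact Nat.pow_right_injective (le_refl 2) this
    rw [hinj1, hinj2, ← Finset.sum_mul, sum_range_two_pow]
    have h2n : 2 * n = 2 ^ m * q := by rw [hn, h2m]; ring
    rw [h2n]
    have : 2 ^ m - 1 = q := rfl
    rw [this]
    have h2mq : 2 ^ m = q + 1 := by omega
    rw [h2mq]
    ring
  -- closure under division
  have hdiv : ∀ d ∈ S₁, n / d ∈ S₁ := by
    intro d hd
    rcases (hmem d).1 hd with ⟨i, hi, rfl⟩ | ⟨i, hi, rfl⟩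
    · have : n = 2 ^ i * (2 ^ (m - 1 - i) * q) := by
        rw [hn, ← mul_assoc, ← pow_add]
        congr 2
        omega
      rw [this, Nat.mul_div_cancel_left _ (Nat.pow_pos (by norm_num))]
      exact (hmem _).2 (Or.inr ⟨m - 1 - i, by omega, rfl⟩)
    · have : n = 2 ^ i * q * 2 ^ (m - 1 - i) := by
        rw [hn]
        rw [show (2:ℕ) ^ i * q * 2 ^ (m - 1 - i) = 2 ^ i * 2 ^ (m - 1 - i) * q by ring,
          ← pow_add]
        congr 2
        omega
      rw [this, Nat.mul_div_cancel_left _ (by positivity)]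
      exact (hmem _).2 (Or.inl ⟨m - 1 - i, by omega, rfl⟩)
  refine ⟨hsub, hsum, hdiv, hnpos, S₁, hsub, hsum, ?_⟩
  intro d hd
  constructor
  · exact hdiv d
  · intro h
    have hdvd : d ∣ n := (Nat.mem_divisors.mp hd).1
    have := hdiv _ h
    rwa [Nat.div_div_self hdvd hnpos.ne'] at this
end

section
/- Let n be a positive integer and P a prime with P > σ(n). Then nP is not strongly pseudoperfect. -/
theorem not_strongly_pseudoperfect_of_large_prime (n P : ℕ) (hn : 0 < n)
    (hP : P.Prime) (hlarge : (∑ d ∈ n.divisors, d) < P) :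
    ¬ StronglyPseudoperfect (n * P) := by
  rintro ⟨hpos, S₁, hsub, hsum, hsym⟩
  have hnmem : n ∈ n.divisors := Nat.mem_divisors_self n hn.ne'
  have hnle : n ≤ ∑ d ∈ n.divisors, d :=
    Finset.single_le_sum (fun i _ => Nat.zero_le i) hnmem
  have hnlt : n < P := lt_of_le_of_lt hnle hlarge
  have hPn : ¬ P ∣ n := fun h => absurd (Nat.le_of_dvd hn h) (not_le.mpr hnlt)
  set C := S₁.filter (fun d => ¬ P ∣ d) with hC
  set T := S₁.filter (fun d => P ∣ d) with hT
  have hCdiv : C ⊆ n.divisors := by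
    intro d hd
    rw [hC, Finset.mem_filter] at hd
    obtain ⟨hdS, hdP⟩ := hd
    have hdnP := hsub hdS
    rw [Nat.mem_divisors] at hdnP ⊢
    exact ⟨Nat.Coprime.dvd_of_dvd_mul_right (hP.coprime_iff_not_dvd.mpr hdP).symm hdnP.1, hn.ne'⟩
  have hCle : ∑ d ∈ C, d ≤ ∑ d ∈ n.divisors, d :=
    Finset.sum_le_sum_of_subset hCdiv
  have hsplit : ∑ d ∈ T, d + ∑ d ∈ C, d = 2 * (n * P) := by
    rw [hT, hC, Finset.sum_filter_add_sum_filter_not S₁ (fun d => P ∣ d), hsum]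
  have hPT : P ∣ ∑ d ∈ T, d :=
    Finset.dvd_sum (fun d hd => (Finset.mem_filter.mp hd).2)
  have hPC : P ∣ ∑ d ∈ C, d := by
    have h2 : P ∣ 2 * (n * P) := ⟨2 * n, by ring⟩
    exact (Nat.dvd_add_right hPT).mp (hsplit ▸ h2)
  have hC0 : ∑ d ∈ C, d = 0 :=
    Nat.eq_zero_of_dvd_of_lt hPC (lt_of_le_of_lt hCle hlarge)
  have hCempty : ∀ d, d ∉ C := by
    intro d hd
    have hd0 : 0 < d := Nat.pos_of_mem_divisors (hCdiv hd)
    have hle : d ≤ ∑ x ∈ C, x := Finset.single_le_sum (fun i _ => Nat.zero_le i) hd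
    omega
  have hS₁ne : S₁.Nonempty := by
    rcases S₁.eq_empty_or_nonempty with h | h
    · rw [h, Finset.sum_empty] at hsum
      have : 0 < 2 * (n * P) := by positivity
      omega
    · exact h
  obtain ⟨d, hdS⟩ := hS₁ne
  have hdP : P ∣ d := by
    by_contra h
    exact hCempty d (Finset.mem_filter.mpr ⟨hdS, h⟩)
  have hddvd : d ∣ n * P := (Nat.mem_divisors.mp (hsub hdS)).1
  have hd' : n * P / d ∈ S₁ := (hsym d (hsub hdS)).mp hdS
  obtain ⟨e, he⟩ := hdP
  have hPpos := hP.pos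
  have hedvd : e ∣ n := by
    have h1 : P * e ∣ P * n := by rw [← he, mul_comm P n]; exact hddvd
    exact (mul_dvd_mul_iff_left hPpos.ne').mp h1
  have hquot : n * P / d = n / e := by
    rw [he, mul_comm n P, Nat.mul_div_mul_left _ _ hPpos]
  have hPq : ¬ P ∣ n * P / d := by
    rw [hquot]
    intro h
    exact hPn (h.trans (Nat.div_dvd_of_dvd hedvd))
  exact hCempty _ (Finset.mem_filter.mpr ⟨hd', hPq⟩)
end

section
/- If n is a primary pseudoperfect number other than 1, 2, or 6 (i.e., 1/n + ∑_{p|n} 1/p = 1 with the sum over prime divisors of n, and n ∉ {1,2,6}), then n is abundant: σ(n) > 2n. -/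
theorem primary_pseudoperfect_abundant (n : ℕ) (hn : 0 < n)
    (hpp : (1 : ℚ) / n + ∑ p ∈ n.primeFactors, (1 : ℚ) / p = 1)
    (h1 : n ≠ 1) (h2 : n ≠ 2) (h6 : n ≠ 6) :
    2 * n < (∑ d ∈ n.divisors, d) := by
  have hnQ : (n : ℚ) ≠ 0 := Nat.cast_ne_zero.mpr hn.ne'
  -- n has at least two distinct prime factors
  have hcard : 1 < n.primeFactors.card := by
    rcases Nat.lt_or_ge n.primeFactors.card 2 with h | h
    · exfalso
      interval_cases hc : n.primeFactors.card
      · rw [Finset.card_eq_zero] at hc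
        rw [hc, Finset.sum_empty, add_zero, div_eq_one_iff_eq hnQ] at hpp
        exact h1 (by exact_mod_cast hpp.symm)
      · rw [Finset.card_eq_one] at hc
        obtain ⟨p, hp⟩ := hc
        have hpprime : p.Prime := Nat.prime_of_mem_primeFactors (by rw [hp]; simp)
        rw [hp, Finset.sum_singleton] at hpp
        have hp2 : (2 : ℚ) ≤ p := by exact_mod_cast hpprime.two_le
        have h1p : (1:ℚ)/p ≤ 1/2 := by
          apply div_le_div_of_nonneg_left <;> linarith
        have hn2 : (1:ℚ)/2 ≤ 1/n := by linarith
        have hnpos : (0:ℚ) < n := by exact_mod_cast hn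
        have : (n:ℚ) ≤ 2 := by
          rw [div_le_div_iff₀ (by norm_num) hnpos] at hn2
          linarith
        have : n ≤ 2 := by exact_mod_cast this
        omega
    · exact h
  obtain ⟨p, hpmem, q, hqmem, hne⟩ := Finset.one_lt_card.mp hcard
  have hp : p.Prime := Nat.prime_of_mem_primeFactors hpmem
  have hq : q.Prime := Nat.prime_of_mem_primeFactors hqmem
  have hpn : p ∣ n := Nat.dvd_of_mem_primeFactors hpmem
  have hqn : q ∣ n := Nat.dvd_of_mem_primeFactors hqmem
  have hpqdvd : p * q ∣ n := (Nat.Coprime.mul_dvd_of_dvd_of_dvd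
    ((Nat.coprime_primes hp hq).mpr hne) hpn hqn)
  have hpqne : p * q ≠ n := by
    intro heq
    -- then primeFactors n = {p, q} and we derive n = 6
    have hfac : n.primeFactors = {p, q} := by
      rw [← heq, Nat.primeFactors_mul hp.ne_zero hq.ne_zero,
        Nat.Prime.primeFactors hp, Nat.Prime.primeFactors hq]
      rfl
    rw [hfac, Finset.sum_insert (by simpa using hne), Finset.sum_singleton] at hpp
    have hpQ : (p:ℚ) ≠ 0 := Nat.cast_ne_zero.mpr hp.ne_zero
    have hqQ : (q:ℚ) ≠ 0 := Nat.cast_ne_zero.mpr hq.ne_zero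
    rw [← heq] at hpp
    push_cast at hpp
    field_simp at hpp
    have heqn : 1 + (q + p) = p * q := by exact_mod_cast hpp
    have hp2 := hp.two_le
    have hq2 := hq.two_le
    have hp3 : p ≤ 3 := by nlinarith
    have hq3 : q ≤ 3 := by nlinarith
    apply h6
    rw [← heq]
    interval_cases p <;> interval_cases q <;> omega
  -- key: sum of n / r over prime factors is n - 1
  have key : ∑ r ∈ n.primeFactors, n / r = n - 1 := by
    have hcast : ((∑ r ∈ n.primeFactors, n / r : ℕ) : ℚ) = (n : ℚ) - 1 := by
      push_cast
      rw [Finset.sum_congr rfl (fun r hr => by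
        rw [Nat.cast_div (Nat.dvd_of_mem_primeFactors hr)
          (Nat.cast_ne_zero.mpr (Nat.prime_of_mem_primeFactors hr).ne_zero)])]
      have : ∑ r ∈ n.primeFactors, (n:ℚ) / r = (n:ℚ) * ∑ r ∈ n.primeFactors, (1:ℚ) / (r:ℚ) := by
        rw [Finset.mul_sum]
        exact Finset.sum_congr rfl fun r hr => by ring
      rw [this]
      have h2 : ∑ r ∈ n.primeFactors, (1:ℚ) / r = 1 - 1/n := by linarith
      rw [h2]
      field_simp
    have : ((∑ r ∈ n.primeFactors, n / r : ℕ) : ℚ) = ((n - 1 : ℕ) : ℚ) := by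
      rw [hcast, Nat.cast_sub hn]
      norm_num
    exact_mod_cast this
  -- the special subset of divisors
  have hd1 : ∀ r, r ∣ n → n / r * r = n := fun r hr => Nat.div_mul_cancel hr
  have himinj : ∀ x ∈ n.primeFactors, ∀ y ∈ n.primeFactors, n / x = n / y → x = y := by
    intro x hx y hy hxy
    have hxd := Nat.dvd_of_mem_primeFactors hx
    have hyd := Nat.dvd_of_mem_primeFactors hy
    have hpos : 0 < n / x := Nat.div_pos (Nat.le_of_dvd hn hxd) (Nat.prime_of_mem_primeFactors hx).pos
    have := (hd1 x hxd).trans (hd1 y hyd).symm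
    rw [hxy] at this
    exact Nat.eq_of_mul_eq_mul_left (hxy ▸ hpos) this
  set im := n.primeFactors.image (fun r => n / r) with him
  have hsum_im : ∑ d ∈ im, d = n - 1 := by
    rw [him, Finset.sum_image himinj]
    exact key
  have hpq1 : 1 < p * q := by
    have := hp.two_le; have := hq.two_le; nlinarith
  have hnpq_pos : 0 < n / (p * q) := Nat.div_pos (Nat.le_of_dvd hn hpqdvd) (by omega)
  have hnpq_mul : n / (p * q) * (p * q) = n := Nat.div_mul_cancel hpqdvd
  have hnpq_ne1 : n / (p * q) ≠ 1 := by
    intro h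
    rw [h, one_mul] at hnpq_mul
    exact hpqne hnpq_mul
  have hnpq_nen : n / (p * q) ≠ n := by
    intro h
    rw [h] at hnpq_mul
    nlinarith
  have hnotprime : ∀ r ∈ n.primeFactors, n / r ≠ 1 ∧ n / r ≠ n ∧ n / r ≠ n / (p * q) := by
    intro r hr
    have hrp := Nat.prime_of_mem_primeFactors hr
    have hrd := Nat.dvd_of_mem_primeFactors hr
    have hmul := hd1 r hrd
    refine ⟨?_, ?_, ?_⟩
    · intro h
      rw [h, one_mul] at hmul
      -- n = r, but p*q ∣ n = r prime
      rw [← hmul] at hpqdvd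
      rcases (Nat.Prime.eq_one_or_self_of_dvd hrp p (dvd_trans (dvd_mul_right p q) hpqdvd)) with h' | h'
      · exact hp.one_lt.ne' h'
      · rcases (Nat.Prime.eq_one_or_self_of_dvd hrp q (dvd_trans (dvd_mul_left q p) hpqdvd)) with h'' | h''
        · exact hq.one_lt.ne' h''
        · exact hne (h'.trans h''.symm)
    · intro h
      rw [h] at hmul
      have h2r := hrp.two_le
      nlinarith
    · intro h
      have heq2 : n / (p * q) * (p * q) = n / (p * q) * r := by
        rw [hnpq_mul, ← h, hmul]
      have : p * q = r := Nat.eq_of_mul_eq_mul_left hnpq_pos heq2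
      rcases (Nat.Prime.eq_one_or_self_of_dvd hrp p (this ▸ dvd_mul_right p q)) with h' | h'
      · exact hp.one_lt.ne' h'
      · rcases (Nat.Prime.eq_one_or_self_of_dvd hrp q (this ▸ dvd_mul_left q p)) with h'' | h''
        · exact hq.one_lt.ne' h''
        · exact hne (h'.trans h''.symm)
  have hn2 : 2 ≤ n := by omega
  set s : Finset ℕ := insert 1 (insert n (insert (n / (p * q)) im)) with hs
  have hsub : s ⊆ n.divisors := by
    intro d hd
    rw [Nat.mem_divisors]
    refine ⟨?_, hn.ne'⟩
    simp only [hs, Finset.mem_insert, him, Finset.mem_image] at hd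
    rcases hd with rfl | rfl | rfl | ⟨r, hr, rfl⟩
    · exact one_dvd n
    · exact dvd_rfl
    · exact Nat.div_dvd_of_dvd hpqdvd
    · exact Nat.div_dvd_of_dvd (Nat.dvd_of_mem_primeFactors hr)
  have hsum_s : ∑ d ∈ s, d = 1 + (n + (n / (p * q) + (n - 1))) := by
    rw [hs]
    rw [Finset.sum_insert, Finset.sum_insert, Finset.sum_insert, hsum_im]
    · rw [him, Finset.mem_image]
      rintro ⟨r, hr, hrq⟩
      exact (hnotprime r hr).2.2 hrq
    · simp only [Finset.mem_insert, him, Finset.mem_image]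
      rintro (h | ⟨r, hr, hrq⟩)
      · exact hnpq_nen h.symm
      · exact (hnotprime r hr).2.1 hrq
    · simp only [Finset.mem_insert, him, Finset.mem_image]
      rintro (h | h | ⟨r, hr, hrq⟩)
      · omega
      · exact hnpq_ne1 h.symm
      · exact (hnotprime r hr).1 hrq
  have hle : ∑ d ∈ s, d ≤ ∑ d ∈ n.divisors, d :=
    Finset.sum_le_sum_of_subset hsub
  omega
end
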